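/- For an elementary Dyck path L_{u×v} of type (−1) in H(a) (a ≥ 3), assuming u ≤ v one has 1 ≤ v/u < a, and there exists an essential Dyck path M_{u×v} of size u × v that contains no framed subpaths of type (−1) or of type (0). -/

import Mathlib

open List

/-- The sequence `A 0 = 0`, `A 1 = 1`, `A (n+2) = a * A (n+1) - A n + 1` (for `a ≥ 3`
this agrees with the integer recurrence; subtraction does not truncate). -/
def AN (a : ℕ) : ℕ → ℕ
  | 0 => 0
  | 1 => 1
  | n + 2 => a * AN a (n + 1) + 1 - AN a n

/-- Elementary path `L_{u×v}`: `u` east steps (`false`) followed by `v` north steps (`true`). -/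
def L (u v : ℕ) : List Bool := List.replicate u false ++ List.replicate v true

def east (w : List Bool) : ℕ := w.count false
def north (w : List Bool) : ℕ := w.count true

/-- A word is a Dyck path (of its own size): it never goes above the diagonal. -/
def IsDyckWord (w : List Bool) : Prop :=
  ∀ p : List Bool, p <+: w → east w * north p ≤ north w * east p

/-- A Dyck path of size `r × s`. -/
def IsDyckSize (r s : ℕ) (w : List Bool) : Prop :=
  east w = r ∧ north w = s ∧ ∀ p : List Bool, p <+: w → r * north p ≤ s * east p

def powWord (w : List Bool) (d : ℕ) : List Bool := (List.replicate d w).flatten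

/-- An essential (primitive) path: not a `d`-fold concatenation of a shorter path, `d ≥ 2`. -/
def Essential (w : List Bool) : Prop :=
  w ≠ [] ∧ ∀ (w₀ : List Bool) (d : ℕ), 2 ≤ d → w ≠ powWord w₀ d

/-- The cyclic-equivalence class (orbit under rotation) of a word. -/
def Orbit (w : List Bool) : Set (List Bool) := {w' | ∃ n : ℕ, w' = w.rotate n}

/-- `L_{u×v}` is of type `(-1)`: `A n ≤ min(u,v)`, `max(u,v) < A (n+1)` with `n` even, `n > 0`. -/
def TypeNeg (a u v : ℕ) : Prop :=
  ∃ n : ℕ, 1 ≤ n ∧ AN a (2 * n) ≤ min u v ∧ max u v < AN a (2 * n + 1)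

/-- `L_{u×v}` is of type `(0)`: `A n ≤ min(u,v) < A (n+1) ≤ max(u,v)` with `n > 0`. -/
def TypeZero (a u v : ℕ) : Prop :=
  ∃ n : ℕ, 1 ≤ n ∧ AN a n ≤ min u v ∧ min u v < AN a (n + 1) ∧ AN a (n + 1) ≤ max u v

/-- `sub` occurs in `D` as a framed subpath (endpoints are 21-corners of `D`). -/
def FramedOcc (D sub : List Bool) : Prop :=
  ∃ pre post : List Bool, D = pre ++ sub ++ post ∧
    (pre = [] ∨ ∃ p, pre = p ++ [true]) ∧ (post = [] ∨ ∃ q, post = false :: q)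

def HasFramedZero (a : ℕ) (D : List Bool) : Prop :=
  ∃ u v : ℕ, TypeZero a u v ∧ FramedOcc D (L u v)

def HasFramedNeg (a : ℕ) (D : List Bool) : Prop :=
  ∃ u v : ℕ, TypeNeg a u v ∧ FramedOcc D (L u v)

/-- The number of framed subpaths of type `(-1)` of `D` (occurrences indexed by the
prefix before them together with the size `(u,v)`). -/
noncomputable def negCount (a : ℕ) (D : List Bool) : ℕ :=
  Set.ncard {x : List Bool × ℕ × ℕ | TypeNeg a x.2.1 x.2.2 ∧
    ∃ post : List Bool, D = x.1 ++ L x.2.1 x.2.2 ++ post ∧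
      (x.1 = [] ∨ ∃ p, x.1 = p ++ [true]) ∧ (post = [] ∨ ∃ q, post = false :: q)}

/-- The elementary blocks used in concatenations: `(i, false)` is `L_{A(i+1)×A i}`,
`(i, true)` is `L_{A i×A(i+1)}`. -/
def block (a : ℕ) : ℕ × Bool → List Bool
  | (i, false) => L (AN a (i + 1)) (AN a i)
  | (i, true) => L (AN a i) (AN a (i + 1))

/-- The sign of a concatenation: `(-1)^(number of blocks with odd index)`. -/
def sgnC (s : List (ℕ × Bool)) : ℤ := (-1) ^ (s.filter (fun x => x.1 % 2 == 1)).length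

/-- The set `S(D)` of concatenations of elementary blocks realizing `D`. -/
def SDyck (a : ℕ) (D : List Bool) : Set (List (ℕ × Bool)) :=
  {s | (s.map (block a)).flatten = D}

/-- The contribution multiplicity `c(D) = Σ_{s ∈ S(D)} sgn(s)`. -/
noncomputable def cMult (a : ℕ) (D : List Bool) : ℤ := ∑ᶠ s ∈ SDyck a D, sgnC s

-- The contribution multiplicity of an equivalence class, computed on a Dyck-word
-- representative (it is independent of the choice).
open Classical in
noncomputable def cClass (a : ℕ) (C : Set (List Bool)) : ℤ :=
  if h : ∃ w, w ∈ C ∧ IsDyckWord w then cMult a h.choose else 0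


-- AN lemmas
lemma AN_two (a : ℕ) : AN a 2 = a + 1 := by simp [AN]

lemma AN_lt_succ (a : ℕ) (ha : 3 ≤ a) (n : ℕ) : AN a n < AN a (n + 1) := by
  induction n with
  | zero => simp [AN]
  | succ n ih =>
    have h3 : 3 * AN a (n + 1) ≤ a * AN a (n + 1) := Nat.mul_le_mul_right _ ha
    have hdef : AN a (n + 1 + 1) = a * AN a (n + 1) + 1 - AN a n := rfl
    generalize hY : a * AN a (n + 1) = Y at h3 hdef
    omega

lemma AN_mono (a : ℕ) (ha : 3 ≤ a) : StrictMono (AN a) :=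
  strictMono_nat_of_lt_succ (AN_lt_succ a ha)

lemma AN_one_le (a : ℕ) (ha : 3 ≤ a) {n : ℕ} (hn : 1 ≤ n) : 1 ≤ AN a n := by
  have : AN a 1 ≤ AN a n := (AN_mono a ha).monotone hn
  simpa [AN] using this

lemma AN_a1_le (a : ℕ) (ha : 3 ≤ a) {n : ℕ} (hn : 2 ≤ n) : a + 1 ≤ AN a n := by
  have : AN a 2 ≤ AN a n := (AN_mono a ha).monotone hn
  rwa [AN_two] at this

lemma AN_succ_le (a : ℕ) (ha : 3 ≤ a) {m : ℕ} (hm : 2 ≤ m) : AN a (m + 1) ≤ a * AN a m := by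
  obtain ⟨k, rfl⟩ : ∃ k, m = k + 2 := ⟨m - 2, by omega⟩
  have h1 : 1 ≤ AN a (k + 1) := AN_one_le a ha (by omega)
  have hdef : AN a (k + 2 + 1) = a * AN a (k + 2) + 1 - AN a (k + 1) := rfl
  generalize hY : a * AN a (k + 2) = Y at hdef ⊢
  omega

def blkW (c : ℕ) : List Bool := false :: List.replicate c true

lemma flat_count_false (cs : List ℕ) : ((cs.map blkW).flatten).count false = cs.length := by
  induction cs with
  | nil => simp
  | cons c cst ih => simp [blkW, List.count_cons, List.count_replicate, ih]

lemma flat_count_true (cs : List ℕ) : ((cs.map blkW).flatten).count true = cs.sum := by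
  induction cs with
  | nil => simp
  | cons c cst ih => simp [blkW, List.count_cons, List.count_replicate, ih]

lemma prefix_append_cases {p x y : List Bool} (h : p <+: x ++ y) :
    p <+: x ∨ ∃ p', p = x ++ p' ∧ p' <+: y := by
  rcases h with ⟨r, hr⟩
  rcases List.append_eq_append_iff.mp hr.symm with ⟨a', ha1, ha2⟩ | ⟨c', hc1, hc2⟩
  · right; exact ⟨a', ha1, r, ha2.symm⟩
  · left; exact ⟨c', hc1.symm⟩

lemma prefix_bound : ∀ (cs : List ℕ) (p : List Bool), p <+: (cs.map blkW).flatten →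
    p.count true ≤ ((cs.take (p.count false)).sum) := by
  intro cs
  induction cs with
  | nil =>
    intro p hp
    rw [show (List.map blkW []).flatten = [] from rfl, List.prefix_nil] at hp
    simp [hp]
  | cons c cst ih =>
    intro p hp
    have hw : ((c :: cst).map blkW).flatten = blkW c ++ (cst.map blkW).flatten := by simp
    rw [hw] at hp
    rcases prefix_append_cases hp with h1 | ⟨p', rfl, hp'⟩
    · match p, h1 with
      | [], _ => simp
      | b :: p', h1 =>
        rw [show blkW c = false :: List.replicate c true from rfl, List.cons_prefix_cons] at h1
        obtain ⟨rfl, hp'⟩ := h1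
        have hp'' : p' = List.replicate (min p'.length c) true := by
          have := List.prefix_iff_eq_take.mp hp'
          rwa [List.take_replicate] at this
        rw [hp'']
        simp [List.count_cons, List.count_replicate, List.take_succ_cons]
    · have ihp := ih p' hp'
      have hcf : (blkW c ++ p').count false = p'.count false + 1 := by
        simp [blkW, List.count_cons, List.count_replicate]
      have hct : (blkW c ++ p').count true = c + p'.count true := by
        simp [blkW, List.count_cons, List.count_replicate]
      rw [hcf, hct, List.take_succ_cons, List.sum_cons]
      omega

lemma trueRun_bound (K : ℕ) : ∀ (cs : List ℕ), (∀ x ∈ cs, x ≤ K) → ∀ (c : ℕ), c ≤ K →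
    ∀ (s t : List Bool) (m : ℕ),
      List.replicate c true ++ (cs.map blkW).flatten = s ++ (List.replicate m true ++ t) →
      m ≤ K := by
  intro cs
  induction cs with
  | nil =>
    intro _ c hc s t m h
    have := congrArg List.length h
    simp at this
    omega
  | cons c' cst ih =>
    intro hall c hc s t m h
    have hc' : c' ≤ K := hall c' (by simp)
    have hall' : ∀ x ∈ cst, x ≤ K := fun x hx => hall x (by simp [hx])
    rcases le_or_gt (s.length + m) c with h1 | h1
    · omega
    rcases le_or_gt (c + 1) s.length with h2 | h2
    · have hw : List.replicate c true ++ (((c' :: cst)).map blkW).flatten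
          = (List.replicate c true ++ [false]) ++ (List.replicate c' true ++ (cst.map blkW).flatten) := by
        simp [blkW]
      rw [hw] at h
      have hd := congrArg (List.drop (c + 1)) h
      rw [List.drop_left' (by simp)] at hd
      rw [List.drop_append_of_le_length h2] at hd
      exact ih hall' c' hc' _ _ m hd
    · -- s.length ≤ c < s.length + m : element at index c
      exfalso
      have hgl : (List.replicate c true ++ (((c' :: cst)).map blkW).flatten)[c]? = some false := by
        rw [List.getElem?_append_right (by simp)]
        simp [blkW]
      rw [h] at hgl
      rw [List.getElem?_append_right (by omega)] at hgl
      rw [List.getElem?_append_left (by simp; omega)] at hgl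
      rw [List.getElem?_replicate] at hgl
      simp only [if_pos (by omega : c - s.length < m)] at hgl
      simp at hgl

lemma falseRun_bound : ∀ (cs : List ℕ), (∀ x ∈ cs, 1 ≤ x) → ∀ (c : ℕ) (s t : List Bool) (m : ℕ),
    List.replicate c true ++ (cs.map blkW).flatten = s ++ (List.replicate m false ++ t) →
    m ≤ 1 := by
  intro cs
  induction cs with
  | nil =>
    intro _ c s t m h
    rcases Nat.eq_zero_or_pos m with hm | hm
    · omega
    exfalso
    simp only [List.map_nil, List.flatten_nil, List.append_nil] at h
    have hlen := congrArg List.length h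
    simp at hlen
    have hgl := congrArg (fun l => l[s.length]?) h
    simp only [List.getElem?_replicate] at hgl
    rw [List.getElem?_append_right (le_refl _)] at hgl
    rw [Nat.sub_self, List.getElem?_append_left (by simpa using hm)] at hgl
    rw [List.getElem?_replicate] at hgl
    simp only [if_pos hm, if_pos (show s.length < c by omega)] at hgl
    simp at hgl
  | cons c' cst ih =>
    intro hall c s t m h
    have hc' : 1 ≤ c' := hall c' (by simp)
    have hall' : ∀ x ∈ cst, x ≤ 1 ∨ True := fun _ _ => Or.inr trivial
    have hall'' : ∀ x ∈ cst, 1 ≤ x := fun x hx => hall x (by simp [hx])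
    by_cases hm : m ≤ 1
    · exact hm
    push_neg at hm
    exfalso
    have hw : List.replicate c true ++ (((c' :: cst)).map blkW).flatten
        = (List.replicate c true ++ [false]) ++ (List.replicate c' true ++ (cst.map blkW).flatten) := by
      simp [blkW]
    rcases lt_trichotomy s.length c with h2 | h2 | h2
    · -- index s.length : LHS true, RHS false
      have hgl := congrArg (fun l => l[s.length]?) h
      rw [List.getElem?_append_left (by simp; omega), List.getElem?_replicate,
        if_pos h2] at hgl
      rw [List.getElem?_append_right (le_refl _), Nat.sub_self,
        List.getElem?_append_left (by simp; omega), List.getElem?_replicate,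
        if_pos (by omega : 0 < m)] at hgl
      simp at hgl
    · -- index c+1 : LHS true (c' ≥ 1), RHS false
      have hgl := congrArg (fun l => l[c + 1]?) h
      rw [hw] at hgl
      rw [List.getElem?_append_right (by simp), show c + 1 - (List.replicate c true ++ [false]).length = 0 by simp,
        List.getElem?_append_left (by simp; omega), List.getElem?_replicate,
        if_pos (show 0 < c' by omega)] at hgl
      rw [List.getElem?_append_right (by omega), show c + 1 - s.length = 1 by omega,
        List.getElem?_append_left (by simp; omega), List.getElem?_replicate,
        if_pos (by omega : 1 < m)] at hgl
      simp at hgl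
    · -- drop c+1 and use ih
      rw [hw] at h
      have hd := congrArg (List.drop (c + 1)) h
      rw [List.drop_left' (by simp)] at hd
      rw [List.drop_append_of_le_length (by omega)] at hd
      exact absurd (ih hall'' c' _ _ m hd) (by omega)


lemma build_M (a u v : ℕ) (ha : 3 ≤ a) (hu : 1 ≤ u) (cs : List ℕ)
    (hlen : cs.length = u) (hsum : cs.sum = v)
    (hK : ∀ x ∈ cs, x ≤ a) (htail : ∀ x ∈ cs.tail, 1 ≤ x)
    (hS : ∀ i, i ≤ u → u * (cs.take i).sum ≤ v * i)
    (hSs : ∀ i, 1 ≤ i → i < u → u * (cs.take i).sum < v * i) :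
    IsDyckSize u v ((cs.map blkW).flatten) ∧ Essential ((cs.map blkW).flatten) ∧
      (∀ u' v' : ℕ, 1 ≤ u' → 1 ≤ v' → a + 1 ≤ max u' v' →
        ¬ ∃ pre post : List Bool, (cs.map blkW).flatten = pre ++ L u' v' ++ post) := by
  have hcf := flat_count_false cs
  have hct := flat_count_true cs
  refine ⟨⟨?_, ?_, ?_⟩, ⟨?_, ?_⟩, ?_⟩
  · show ((cs.map blkW).flatten).count false = u
    rw [hcf, hlen]
  · show ((cs.map blkW).flatten).count true = v
    rw [hct, hsum]
  · -- Dyck inequality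
    intro p hp
    show u * p.count true ≤ v * p.count false
    have hb := prefix_bound cs p hp
    have he : p.count false ≤ u := by
      have := hp.sublist.count_le false
      omega
    calc u * p.count true ≤ u * (cs.take (p.count false)).sum := Nat.mul_le_mul_left _ hb
      _ ≤ v * p.count false := hS _ he
  · -- nonempty
    intro hnil
    rw [hnil] at hcf
    simp at hcf
    omega
  · -- primitive
    intro w d hd heq
    have heq' : (cs.map blkW).flatten = (List.replicate d w).flatten := heq
    have hcfw : u = d * w.count false := by
      rw [← hlen, ← hcf, heq']
      simp [List.count_flatten, Function.comp]
    have hctw : v = d * w.count true := by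
      rw [← hsum, ← hct, heq']
      simp [List.count_flatten, Function.comp]
    have hew : 1 ≤ w.count false := by
      rcases Nat.eq_zero_or_pos (w.count false) with h | h
      · rw [h, Nat.mul_zero] at hcfw; omega
      · exact h
    have hewlt : w.count false < u := by
      have h2 : w.count false + w.count false ≤ d * w.count false := by
        calc w.count false + w.count false = 2 * w.count false := by ring
          _ ≤ d * w.count false := Nat.mul_le_mul_right _ hd
      omega
    have hwpre : w <+: (cs.map blkW).flatten := by
      rw [heq']
      obtain ⟨d', rfl⟩ : ∃ d', d = d' + 1 := ⟨d - 1, by omega⟩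
      rw [List.replicate_succ, List.flatten_cons]
      exact ⟨_, rfl⟩
    have hb := prefix_bound cs w hwpre
    have hstrict := hSs _ hew hewlt
    have hEq : u * w.count true = v * w.count false := by
      rw [hcfw, hctw]; ring
    have : u * w.count true ≤ u * (cs.take (w.count false)).sum := Nat.mul_le_mul_left _ hb
    omega
  · -- no framed bad subpath
    rintro u' v' hu' hv' hmax ⟨pre, post, heq⟩
    have heq' : (cs.map blkW).flatten
        = (pre ++ List.replicate u' false) ++ (List.replicate v' true ++ post) := by
      rw [heq, L]
      simp [List.append_assoc]
    have hv'a : v' ≤ a := by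
      refine trueRun_bound a cs hK 0 (Nat.zero_le a) (pre ++ List.replicate u' false) post v' ?_
      simpa using heq'
    obtain ⟨c0, cst, rfl⟩ : ∃ c0 cst, cs = c0 :: cst := by
      cases cs with
      | nil => simp at hlen; omega
      | cons c0 cst => exact ⟨c0, cst, rfl⟩
    have htail' : ∀ x ∈ cst, 1 ≤ x := by simpa using htail
    have hM : ((c0 :: cst).map blkW).flatten
        = false :: (List.replicate c0 true ++ (cst.map blkW).flatten) := by
      simp [blkW]
    have hu'2 : u' ≤ 2 := by
      rw [hM] at heq'
      cases pre with
      | nil =>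
        simp only [List.nil_append] at heq'
        obtain ⟨u'', rfl⟩ : ∃ u'', u' = u'' + 1 := ⟨u' - 1, by omega⟩
        rw [List.replicate_succ, List.cons_append] at heq'
        injection heq' with h1 h2
        have := falseRun_bound cst htail' c0 [] (List.replicate v' true ++ post) u''
          (by simpa using h2)
        omega
      | cons b pre' =>
        rw [List.cons_append, List.cons_append] at heq'
        have heq'' : List.replicate c0 true ++ (cst.map blkW).flatten
            = pre' ++ (List.replicate u' false ++ (List.replicate v' true ++ post)) := by
          injection heq' with h1 h2
          rw [h2]; simp [List.append_assoc]
        have := falseRun_bound cst htail' c0 pre' (List.replicate v' true ++ post) u' heq''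
        omega
    have : max u' v' ≤ a := max_le (by omega) hv'a
    omega
lemma take_sum_rep (i k r x y : ℕ) : ((List.replicate k x ++ List.replicate r y).take i).sum
    = min i k * x + min (i - k) r * y := by
  rw [List.take_append, List.take_replicate, List.take_replicate, List.sum_append]
  simp [List.sum_replicate, smul_eq_mul]

lemma shape1_le (k r q' v : ℕ) (hr : 1 ≤ r) (hk : 1 ≤ k) (hdm : (k + r) * (q' + 1) + r = v) :
    ∀ i, i ≤ k + r →
      (k + r) * (((List.replicate k (q' + 1) ++ List.replicate r (q' + 2)).take i).sum) ≤ v * i := by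
  intro i hi
  rw [take_sum_rep]
  rcases le_or_gt i k with h | h
  · rw [min_eq_left h, Nat.sub_eq_zero_of_le h, Nat.zero_min, Nat.zero_mul, Nat.add_zero, ← hdm]
    nlinarith []
  · obtain ⟨j, rfl⟩ : ∃ j, i = k + j := ⟨i - k, by omega⟩
    have hjr : j ≤ r := by omega
    rw [min_eq_right (by omega), Nat.add_sub_cancel_left, min_eq_left hjr, ← hdm]
    nlinarith [Nat.mul_le_mul_left k hjr]

lemma shape1_lt (k r q' v : ℕ) (hr : 1 ≤ r) (hk : 1 ≤ k) (hdm : (k + r) * (q' + 1) + r = v) :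
    ∀ i, 1 ≤ i → i < k + r →
      (k + r) * (((List.replicate k (q' + 1) ++ List.replicate r (q' + 2)).take i).sum) < v * i := by
  intro i hi1 hi2
  rw [take_sum_rep]
  rcases le_or_gt i k with h | h
  · rw [min_eq_left h, Nat.sub_eq_zero_of_le h, Nat.zero_min, Nat.zero_mul, Nat.add_zero, ← hdm]
    nlinarith [Nat.mul_le_mul hr hi1]
  · obtain ⟨j, rfl⟩ : ∃ j, i = k + j := ⟨i - k, by omega⟩
    have hjr : j < r := by omega
    rw [min_eq_right (by omega), Nat.add_sub_cancel_left, min_eq_left (le_of_lt hjr), ← hdm]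
    nlinarith [Nat.mul_le_mul_left k hjr]

lemma shape2_sum (w q' : ℕ) :
    (q' :: (List.replicate w (q' + 1) ++ List.replicate 1 (q' + 2))).sum = (w + 2) * (q' + 1) := by
  simp [List.sum_replicate, smul_eq_mul]
  ring

lemma shape2_lt (w q' v : ℕ) (hv2 : (w + 2) * (q' + 1) = v) :
    ∀ i, 1 ≤ i → i < w + 2 →
      (w + 2) * (((q' :: (List.replicate w (q' + 1) ++ List.replicate 1 (q' + 2))).take i).sum) < v * i := by
  intro i hi1 hi2
  obtain ⟨i', rfl⟩ : ∃ i', i = i' + 1 := ⟨i - 1, by omega⟩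
  rw [List.take_succ_cons, List.sum_cons, take_sum_rep]
  have hi'w : i' ≤ w := by omega
  rw [min_eq_left hi'w, Nat.sub_eq_zero_of_le hi'w, Nat.zero_min, Nat.zero_mul, Nat.add_zero, ← hv2]
  nlinarith []

lemma shape2_le (w q' v : ℕ) (hv2 : (w + 2) * (q' + 1) = v) :
    ∀ i, i ≤ w + 2 →
      (w + 2) * (((q' :: (List.replicate w (q' + 1) ++ List.replicate 1 (q' + 2))).take i).sum) ≤ v * i := by
  intro i hi
  rcases Nat.eq_zero_or_pos i with rfl | hi1
  · simp
  rcases Nat.lt_or_ge i (w + 2) with h | h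
  · exact le_of_lt (shape2_lt w q' v hv2 i hi1 h)
  · have hiu : i = w + 2 := by omega
    subst hiu
    rw [List.take_of_length_le (by simp), shape2_sum, hv2]
    exact le_of_eq (Nat.mul_comm _ _)

/-- For an elementary path `L_{u×v}` of type `(-1)` with `u ≤ v`, one has
`1 ≤ v/u < a`, and there is an essential Dyck path `M` of size `u × v`
containing no framed subpaths of type `(-1)` or of type `(0)`. -/
theorem stmt12 (a u v : ℕ) (ha : 3 ≤ a) (huv : u ≤ v) (ht : TypeNeg a u v) :
    (0 < u ∧ v < a * u) ∧
    ∃ M : List Bool, IsDyckSize u v M ∧ Essential M ∧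
      ¬ HasFramedNeg a M ∧ ¬ HasFramedZero a M := by
  obtain ⟨n, hn1, hmin, hmax⟩ := ht
  rw [min_eq_left huv] at hmin
  rw [max_eq_right huv] at hmax
  have hua : a + 1 ≤ u := le_trans (AN_a1_le a ha (show 2 ≤ 2 * n by omega)) hmin
  have hv : v < a * u := by
    have h1 : AN a (2 * n + 1) ≤ a * AN a (2 * n) := AN_succ_le a ha (by omega)
    have h2 : a * AN a (2 * n) ≤ a * u := Nat.mul_le_mul_left _ hmin
    omega
  refine ⟨⟨by omega, hv⟩, ?_⟩
  have hu0 : 0 < u := by omega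
  have hdm := Nat.div_add_mod v u
  obtain ⟨q', hq⟩ : ∃ q', v / u = q' + 1 := by
    have : 1 ≤ v / u := (Nat.one_le_div_iff hu0).mpr huv
    exact ⟨v / u - 1, by omega⟩
  have hqa : v / u + 1 ≤ a := by
    have : v / u < a := by
      rw [Nat.div_lt_iff_lt_mul hu0]
      omega
    omega
  rw [hq] at hdm hqa
  suffices h : ∃ cs : List ℕ, cs.length = u ∧ cs.sum = v ∧ (∀ x ∈ cs, x ≤ a) ∧
      (∀ x ∈ cs.tail, 1 ≤ x) ∧ (∀ i, i ≤ u → u * (cs.take i).sum ≤ v * i) ∧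
      (∀ i, 1 ≤ i → i < u → u * (cs.take i).sum < v * i) by
    obtain ⟨cs, hlen, hsum, hK, htail, hS, hSs⟩ := h
    obtain ⟨hd', he', hkey⟩ := build_M a u v ha (by omega) cs hlen hsum hK htail hS hSs
    refine ⟨(cs.map blkW).flatten, hd', he', ?_, ?_⟩
    · rintro ⟨u', v', ⟨n0, hn0, hmin0, hmax0⟩, pre, post, heqO, -, -⟩
      have h1 : 1 ≤ min u' v' := le_trans (AN_one_le a ha (show 1 ≤ 2 * n0 by omega)) hmin0
      have h2 : a + 1 ≤ max u' v' :=
        le_trans (le_trans (AN_a1_le a ha (show 2 ≤ 2 * n0 by omega)) hmin0) min_le_max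
      exact hkey u' v' (by omega) (by omega) h2 ⟨pre, post, heqO⟩
    · rintro ⟨u', v', ⟨n0, hn0, hmin0, hmax0, hmax1⟩, pre, post, heqO, -, -⟩
      have h1 : 1 ≤ min u' v' := le_trans (AN_one_le a ha hn0) hmin0
      have h2 : a + 1 ≤ max u' v' := le_trans (AN_a1_le a ha (by omega)) hmax1
      exact hkey u' v' (by omega) (by omega) h2 ⟨pre, post, heqO⟩
  have hrlt : v % u < u := Nat.mod_lt _ hu0
  rcases Nat.eq_zero_or_pos (v % u) with hr0 | hr0
  · -- r = 0 : shape 2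
    obtain ⟨w, rfl⟩ : ∃ w, u = w + 2 := ⟨u - 2, by omega⟩
    have hv2 : (w + 2) * (q' + 1) = v := by linarith [hdm]
    refine ⟨q' :: (List.replicate w (q' + 1) ++ List.replicate 1 (q' + 2)),
      by simp, by rw [shape2_sum]; exact hv2, ?_, ?_, shape2_le w q' v hv2, shape2_lt w q' v hv2⟩
    · intro x hx
      simp [List.mem_replicate] at hx
      rcases hx with rfl | ⟨-, rfl⟩ | rfl <;> omega
    · intro x hx
      simp [List.mem_replicate] at hx
      rcases hx with ⟨-, rfl⟩ | rfl <;> omega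
  · -- r ≥ 1 : shape 1
    obtain ⟨r, hR⟩ : ∃ r, v % u = r := ⟨_, rfl⟩
    rw [hR] at hdm hrlt hr0
    obtain ⟨k, rfl⟩ : ∃ k, u = k + r := ⟨u - r, by omega⟩
    have hk : 1 ≤ k := by omega
    refine ⟨List.replicate k (q' + 1) ++ List.replicate r (q' + 2),
      by simp, ?_, ?_, ?_, shape1_le k r q' v hr0 hk hdm, shape1_lt k r q' v hr0 hk hdm⟩
    · simp [List.sum_replicate, smul_eq_mul]
      linarith [hdm]
    · intro x hx
      simp [List.mem_replicate] at hx
      rcases hx with ⟨-, rfl⟩ | ⟨-, rfl⟩ <;> omega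
    · intro x hx
      have hx' := List.mem_of_mem_tail hx
      simp [List.mem_replicate] at hx'
      rcases hx' with ⟨-, rfl⟩ | ⟨-, rfl⟩ <;> omega
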